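/- Let O be a commutative ring, p ∈ O, and η = diag(p^{r₁}, ..., p^{r_n}) with r₁ ≥ ... ≥ r_n ≥ 0 integers. For indices 1 and j and an integer b with 0 ≤ b ≤ r_j and r₁ + b arbitrary, let η' = diag(p^{r₁+b}, p^{r₂}, ..., p^{r_j − b}, ..., p^{r_n}). Then for every unit t ∈ O, the matrix η(t) that agrees with η except for an additional entry p^{r_j − b}·t in position (j, 1) satisfies η(t) = x·η'·y⁻¹ for some x, y products of elementary unitriangular matrices over O, provided r₁ + b ≥ r_j. -/

import Mathlib

open Matrix


private theorem diag_mul_std {n : Type*} [Fintype n] [DecidableEq n] {R : Type*} [CommRing R]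
    (d : n → R) (i j : n) (c : R) :
    Matrix.diagonal d * Matrix.single i j c = Matrix.single i j (d i * c) := by
  ext a b
  rw [Matrix.diagonal_mul]
  simp only [Matrix.single, Matrix.of_apply]
  split_ifs with h
  · rw [h.1]
  · exact mul_zero _

private theorem std_mul_diag {n : Type*} [Fintype n] [DecidableEq n] {R : Type*} [CommRing R]
    (d : n → R) (i j : n) (c : R) :
    Matrix.single i j c * Matrix.diagonal d = Matrix.single i j (c * d j) := by
  ext a b
  rw [Matrix.mul_diagonal]
  simp only [Matrix.single, Matrix.of_apply]
  split_ifs with h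
  · rw [h.2]
  · exact zero_mul _

set_option maxHeartbeats 1600000

/-- Let `η = diag(p^r₁, …, p^rₙ)` with `r₁ ≥ … ≥ rₙ ≥ 0` and, for an index `j ≠ 1` and
`0 ≤ b ≤ r_j` with `r₁ + b ≥ r_j`, let `η' = diag(p^(r₁+b), p^r₂, …, p^(r_j−b), …, p^rₙ)`.
For every unit `t`, the matrix `η(t) = η + p^(r_j−b)·t·E_{j,1}` satisfies
`η(t) = x·η'·y⁻¹` with `x, y` products of elementary unitriangular (transvection)
matrices; equivalently `η(t)·y = x·η'`. -/
theorem degeneration_transvections {O : Type*} [CommRing O] (p : O) (n : ℕ) [NeZero n]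
    (r : Fin n → ℕ) (hr : Antitone r) (j : Fin n) (hj : j ≠ 0) (b : ℕ)
    (hb : b ≤ r j) (hbr : r j ≤ r 0 + b) (t : Oˣ) :
    ∃ Lx Ly : List (Matrix.TransvectionStruct (Fin n) O),
      (Matrix.diagonal (fun m => p ^ r m) +
          Matrix.single j 0 (p ^ (r j - b) * (t : O))) *
        (Ly.map Matrix.TransvectionStruct.toMatrix).prod =
      (Lx.map Matrix.TransvectionStruct.toMatrix).prod *
        Matrix.diagonal (fun m =>
          if m = 0 then p ^ (r 0 + b) else if m = j then p ^ (r j - b) else p ^ r m) := by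
  have ht : ((t⁻¹ : Oˣ) : O) * (t : O) = 1 := t.inv_mul
  have hb' : p ^ (r j - b) * p ^ b = p ^ (r j) := by rw [← pow_add]; congr 1; omega
  have h0' : p ^ (r 0 + b - r j) * p ^ (r j - b) = p ^ (r 0) := by rw [← pow_add]; congr 1; omega
  have hpb : p ^ (r 0) * p ^ b = p ^ (r 0 + b) := by rw [← pow_add]
  refine ⟨[⟨0, j, hj.symm, -(p ^ (r 0 + b - r j) * (p ^ b - 1) * ((t⁻¹ : Oˣ) : O))⟩],
    [⟨0, j, hj.symm, -((p ^ b - 1) * ((t⁻¹ : Oˣ) : O))⟩, ⟨j, 0, hj, -(t : O)⟩], ?_⟩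
  simp only [List.map_cons, List.map_nil, List.prod_cons, List.prod_nil, mul_one,
    Matrix.TransvectionStruct.toMatrix_mk, Matrix.transvection]
  have h12 : (-((p ^ b - 1) * ((t⁻¹ : Oˣ) : O))) * (-(t : O)) = p ^ b - 1 := by
    rw [neg_mul_neg, mul_assoc, ht, mul_one]
  have hT : (1 + single (0 : Fin n) j (-((p ^ b - 1) * ((t⁻¹ : Oˣ) : O)))) *
      (1 + single j (0 : Fin n) (-(t : O)))
      = 1 + single (0 : Fin n) j (-((p ^ b - 1) * ((t⁻¹ : Oˣ) : O)))
        + single j (0 : Fin n) (-(t : O))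
        + single (0 : Fin n) (0 : Fin n) (p ^ b - 1) := by
    rw [mul_add, mul_one, add_mul, one_mul, Matrix.single_mul_single_same, h12]
    abel
  rw [hT]
  simp only [mul_add, add_mul, one_mul, mul_one, diag_mul_std, std_mul_diag,
    Matrix.single_mul_single_same, Matrix.single_mul_single_of_ne _ _ _ _ hj.symm, add_zero,
    hj, if_false, if_pos rfl, if_neg hj, if_true]
  have ht' : ((t : O)) * ((t⁻¹ : Oˣ) : O) = 1 := t.mul_inv
  rw [show p ^ r 0 * -((p ^ b - 1) * ((t⁻¹ : Oˣ) : O))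
      = -(p ^ (r 0 + b - r j) * (p ^ b - 1) * ((t⁻¹ : Oˣ) : O)) * p ^ (r j - b) from by
        linear_combination ((p ^ b - 1) * ((t⁻¹ : Oˣ) : O)) * h0',
    show p ^ (r j - b) * (t : O) * -((p ^ b - 1) * ((t⁻¹ : Oˣ) : O))
      = p ^ (r j - b) - p ^ r j from by
        linear_combination (-(p ^ (r j - b) * (p ^ b - 1))) * ht' - hb',
    show p ^ (r j - b) * (t : O) * (p ^ b - 1)
      = p ^ r j * (t : O) - p ^ (r j - b) * (t : O) from by
        linear_combination (t : O) * hb',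
    show p ^ r 0 * (p ^ b - 1) = p ^ (r 0 + b) - p ^ r 0 from by linear_combination hpb]
  clear hT h12 ht ht' hb hbr hr
  ext i k
  simp only [Matrix.add_apply, Matrix.diagonal_apply, Matrix.single, Matrix.of_apply,
    ite_and]
  split_ifs <;> subst_vars <;> first | rfl | ring1 | simp_all
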